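/- The functor ∂*: 𝒯 → 𝒯 is frank: for every ordered tree S and every ordered tree T', there exists an ordered tree T with ∂*T = T' and ∂*(hom(S,T)) = hom(∂*S, ∂*T). -/

import Mathlib

/-- An ordered tree, concretely presented: a finite set of finite sequences of natural
numbers containing the empty sequence (the root) and closed under prefixes. The tree order
is the prefix order, meets are longest common prefixes, and the linear order on the
immediate successors of a node is given by the numerical order of the next entry (inducing
the lexicographic order on all nodes). Every ordered tree is of this form up to
isomorphism. -/
def IsOTree (T : Finset (List ℕ)) : Prop :=
  [] ∈ T ∧ ∀ s ∈ T, ∀ t : List ℕ, t <+: s → t ∈ T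

/-- The height of a tree: the maximum of `ht(v) = (length of v) + 1` over nodes `v`. -/
def treeHt (T : Finset (List ℕ)) : ℕ :=
  T.sup (fun v => v.length + 1)

/-- The functor `∂*` on objects: the subtree of all nodes of height `< ht(T)`
(and `T` itself if `ht(T) = 1`). -/
def pstar (T : Finset (List ℕ)) : Finset (List ℕ) :=
  if treeHt T = 1 then T else T.filter (fun v => v.length + 1 < treeHt T)

/-- The longest common prefix of two sequences: the meet in the tree order. -/
def lcp : List ℕ → List ℕ → List ℕ
  | a :: as, b :: bs => if a = b then a :: lcp as bs else []
  | _, _ => []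

/-- The lexicographic order `≤_T` on nodes: prefix, or lexicographically smaller at the
first difference. -/
def lexLE (v w : List ℕ) : Prop :=
  v = w ∨ List.Lex (· < ·) v w

/-- `f` is a morphism of the category `𝒯` from `S` to `T` (for trees of unequal heights
there are no morphisms): a height preserving embedding, i.e. a map of `S` into `T` that is
injective on `S`, preserves the lexicographic orders, meets, and heights of nodes. -/
def IsTreeHom (S T : Finset (List ℕ)) (f : List ℕ → List ℕ) : Prop :=
  treeHt S = treeHt T ∧
  (∀ v ∈ S, f v ∈ T) ∧
  (∀ v ∈ S, ∀ w ∈ S, f v = f w → v = w) ∧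
  (∀ v ∈ S, ∀ w ∈ S, lexLE v w → lexLE (f v) (f w)) ∧
  (∀ v ∈ S, ∀ w ∈ S, f (lcp v w) = lcp (f v) (f w)) ∧
  (∀ v ∈ S, (f v).length = v.length)

/-- The functor `∂* : 𝒯 → 𝒯` (which sends `T` to `T* = pstar T` and a morphism to its
restriction to `S*`) is frank: for every ordered tree `S` and every ordered tree `T'`
there exists an ordered tree `T` with `∂*T = T'` and `∂*(hom(S,T)) = hom(∂*S, ∂*T)`,
i.e. every morphism `f' : ∂*S → T'` is the restriction to `∂*S` of a morphism
`f : S → T`. -/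
lemma lcp_nil_left (z : List ℕ) : lcp [] z = [] := by cases z <;> rfl
lemma lcp_nil_right (z : List ℕ) : lcp z [] = [] := by cases z <;> rfl

lemma lcp_self (l : List ℕ) : lcp l l = l := by
  induction l with
  | nil => rfl
  | cons a as ih => simp [lcp, ih]

lemma lcp_comm (a b : List ℕ) : lcp a b = lcp b a := by
  induction a generalizing b with
  | nil => cases b <;> rfl
  | cons x xs ih =>
    cases b with
    | nil => rfl
    | cons y ys =>
      by_cases h : x = y
      · subst h; simp [lcp, ih]
      · simp [lcp, h, Ne.symm h]

lemma lcp_prefix_left (a b : List ℕ) : lcp a b <+: a := by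
  induction a generalizing b with
  | nil => simp [lcp_nil_left]
  | cons x xs ih =>
    cases b with
    | nil => simp [lcp_nil_right]
    | cons y ys =>
      by_cases h : x = y
      · subst h; simpa [lcp, List.cons_prefix_cons] using ih ys
      · simp [lcp, h]

lemma lcp_append_right {b a : List ℕ} (h : b.length ≤ a.length) (x : ℕ) :
    lcp b (a ++ [x]) = lcp b a := by
  induction b generalizing a with
  | nil => simp [lcp_nil_left]
  | cons c cs ih =>
    cases a with
    | nil => simp at h
    | cons d ds =>
      by_cases hcd : c = d
      · subst hcd
        simp only [List.cons_append, lcp, if_pos rfl, List.append_eq]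
        rw [ih (by simpa using h)]
      · simp [lcp, hcd]

lemma lcp_append_ne {p q : List ℕ} (h : p.length = q.length) (hne : p ≠ q) (a b : ℕ) :
    lcp (p ++ [a]) (q ++ [b]) = lcp p q := by
  induction p generalizing q with
  | nil =>
    cases q with
    | nil => exact absurd rfl hne
    | cons d ds => simp at h
  | cons c cs ih =>
    cases q with
    | nil => simp at h
    | cons d ds =>
      by_cases hcd : c = d
      · subst hcd
        have hne' : cs ≠ ds := fun hh => hne (by rw [hh])
        simp only [List.cons_append, lcp, if_pos rfl, List.append_eq]
        rw [ih (by simpa using h) hne']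
      · simp [lcp, hcd]

lemma lcp_append_same (p : List ℕ) {a b : ℕ} (hab : a ≠ b) :
    lcp (p ++ [a]) (p ++ [b]) = p := by
  induction p with
  | nil => simp [lcp, hab]
  | cons c cs ih => simp [lcp, ih]

lemma lex_irrefl (l : List ℕ) : ¬ List.Lex (· < ·) l l := by
  induction l with
  | nil => intro h; cases h
  | cons a as ih =>
    intro h
    cases h with
    | cons h => exact ih h
    | rel h => exact lt_irrefl _ h

lemma lex_append_right {x y : List ℕ} (h : List.Lex (· < ·) x y) (z : List ℕ) :
    List.Lex (· < ·) x (y ++ z) := by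
  induction h with
  | nil => exact List.Lex.nil
  | cons _ ih => exact List.Lex.cons ih
  | rel h => exact List.Lex.rel h

lemma lex_append_self (x : List ℕ) (a : ℕ) : List.Lex (· < ·) x (x ++ [a]) := by
  induction x with
  | nil => exact List.Lex.nil
  | cons c cs ih => exact List.Lex.cons ih

lemma lex_of_lex_append_le {r x : List ℕ} {a : ℕ}
    (h : List.Lex (· < ·) r (x ++ [a])) (hl : r.length ≤ x.length) :
    r = x ∨ List.Lex (· < ·) r x := by
  induction r generalizing x with
  | nil =>
    cases x with
    | nil => exact Or.inl rfl
    | cons d ds => exact Or.inr List.Lex.nil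
  | cons c cs ih =>
    cases x with
    | nil => simp at hl
    | cons d ds =>
      cases h with
      | cons h =>
        rcases ih h (by simpa using hl) with h' | h'
        · exact Or.inl (by rw [h'])
        · exact Or.inr (List.Lex.cons h')
      | rel h => exact Or.inr (List.Lex.rel h)

lemma lex_append_left_of_ge {x r : List ℕ} {a : ℕ}
    (h : List.Lex (· < ·) (x ++ [a]) r) (hl : r.length ≤ x.length) :
    List.Lex (· < ·) x r := by
  induction x generalizing r with
  | nil =>
    have hr : r = [] := List.length_eq_zero_iff.mp (Nat.le_zero.mp hl)
    subst hr; cases h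
  | cons c cs ih =>
    cases r with
    | nil => cases h
    | cons d ds =>
      cases h with
      | cons h => exact List.Lex.cons (ih h (by simpa using hl))
      | rel h => exact List.Lex.rel h

lemma lex_append_of_ge {x r : List ℕ} (h : List.Lex (· < ·) x r)
    (hl : r.length ≤ x.length) (a : ℕ) : List.Lex (· < ·) (x ++ [a]) r := by
  induction x generalizing r with
  | nil =>
    have hr : r = [] := List.length_eq_zero_iff.mp (Nat.le_zero.mp hl)
    subst hr; cases h
  | cons c cs ih =>
    cases r with
    | nil => cases h
    | cons d ds =>
      cases h with
      | cons h => exact List.Lex.cons (ih h (by simpa using hl))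
      | rel h => exact List.Lex.rel h

lemma lex_append_of_lex {x y : List ℕ} (h : List.Lex (· < ·) x y)
    (hl : x.length = y.length) (a b : ℕ) :
    List.Lex (· < ·) (x ++ [a]) (y ++ [b]) := by
  induction x generalizing y with
  | nil =>
    have hy : y = [] := (List.length_eq_zero_iff.mp hl.symm)
    subst hy; cases h
  | cons c cs ih =>
    cases y with
    | nil => simp at hl
    | cons d ds =>
      cases h with
      | cons h => exact List.Lex.cons (ih h (by simpa using hl))
      | rel h => exact List.Lex.rel h

lemma lex_of_lex_append {x y : List ℕ} {a b : ℕ}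
    (h : List.Lex (· < ·) (x ++ [a]) (y ++ [b])) (hl : x.length = y.length)
    (hne : x ≠ y) : List.Lex (· < ·) x y := by
  induction x generalizing y with
  | nil =>
    have hy : y = [] := (List.length_eq_zero_iff.mp hl.symm)
    exact absurd hy.symm hne
  | cons c cs ih =>
    cases y with
    | nil => simp at hl
    | cons d ds =>
      cases h with
      | cons h =>
        have : cs ≠ ds := fun hh => hne (by rw [hh])
        exact List.Lex.cons (ih h (by simpa using hl) this)
      | rel h => exact List.Lex.rel h

lemma lt_of_lex_append_same {x : List ℕ} {a b : ℕ}
    (h : List.Lex (· < ·) (x ++ [a]) (x ++ [b])) : a < b := by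
  induction x with
  | nil =>
    cases h with
    | cons h => cases h
    | rel h => exact h
  | cons c cs ih =>
    cases h with
    | cons h => exact ih h
    | rel h => exact absurd h (lt_irrefl _)

lemma lex_append_same_of_lt (x : List ℕ) {a b : ℕ} (h : a < b) :
    List.Lex (· < ·) (x ++ [a]) (x ++ [b]) := by
  induction x with
  | nil => exact List.Lex.rel h
  | cons c cs ih => exact List.Lex.cons ih

lemma len_lt_treeHt {T : Finset (List ℕ)} {v : List ℕ} (hv : v ∈ T) :
    v.length + 1 ≤ treeHt T :=
  Finset.le_sup (f := fun v : List ℕ => v.length + 1) hv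

lemma treeHt_pos {T : Finset (List ℕ)} (hT : IsOTree T) : 1 ≤ treeHt T :=
  len_lt_treeHt hT.1

lemma exists_top {T : Finset (List ℕ)} (hT : IsOTree T) :
    ∃ w ∈ T, w.length + 1 = treeHt T := by
  obtain ⟨w, hw, hsup⟩ := Finset.exists_mem_eq_sup T ⟨[], hT.1⟩ (fun v => v.length + 1)
  exact ⟨w, hw, hsup.symm⟩

lemma treeHt_pstar {S : Finset (List ℕ)} (hS : IsOTree S) (h2 : 2 ≤ treeHt S) :
    treeHt (pstar S) = treeHt S - 1 := by
  have hne : treeHt S ≠ 1 := by omega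
  rw [pstar, if_neg hne]
  apply le_antisymm
  · apply Finset.sup_le
    intro v hv
    have := (Finset.mem_filter.mp hv).2
    omega
  · obtain ⟨w, hw, hlen⟩ := exists_top hS
    have hw' : w.take (treeHt S - 2) ∈ S := hS.2 w hw _ (List.take_prefix _ _)
    have hlen' : (w.take (treeHt S - 2)).length = treeHt S - 2 := by
      rw [List.length_take]; omega
    have hmem : w.take (treeHt S - 2) ∈ S.filter (fun v => v.length + 1 < treeHt S) := by
      rw [Finset.mem_filter]
      exact ⟨hw', by omega⟩
    have := len_lt_treeHt hmem
    omega

def extendTree (T' : Finset (List ℕ)) (M : ℕ) : Finset (List ℕ) :=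
  T' ∪ (T'.filter fun w => w.length + 1 = treeHt T').biUnion
      fun w => (Finset.range (M + 1)).image fun i => w ++ [i]

lemma mem_extendTree {T' : Finset (List ℕ)} {M : ℕ} {v : List ℕ} :
    v ∈ extendTree T' M ↔
      v ∈ T' ∨ ∃ w, w ∈ T' ∧ w.length + 1 = treeHt T' ∧ ∃ i, i ≤ M ∧ v = w ++ [i] := by
  simp only [extendTree, Finset.mem_union, Finset.mem_biUnion, Finset.mem_filter,
    Finset.mem_image, Finset.mem_range, Nat.lt_succ_iff]
  constructor
  · rintro (h | ⟨w, ⟨hw, hlen⟩, i, hi, rfl⟩)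
    · exact Or.inl h
    · exact Or.inr ⟨w, hw, hlen, i, hi, rfl⟩
  · rintro (h | ⟨w, hw, hlen, i, hi, rfl⟩)
    · exact Or.inl h
    · exact Or.inr ⟨w, ⟨hw, hlen⟩, i, hi, rfl⟩

lemma isOTree_extendTree {T' : Finset (List ℕ)} (hT' : IsOTree T') (M : ℕ) :
    IsOTree (extendTree T' M) := by
  constructor
  · exact mem_extendTree.mpr (Or.inl hT'.1)
  · intro s hs t ht
    rcases mem_extendTree.mp hs with h | ⟨w, hw, hlen, i, hi, rfl⟩
    · exact mem_extendTree.mpr (Or.inl (hT'.2 s h t ht))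
    · by_cases hl : t.length ≤ w.length
      · have : t <+: w := List.prefix_of_prefix_length_le ht (List.prefix_append w [i]) hl
        exact mem_extendTree.mpr (Or.inl (hT'.2 w hw t this))
      · have h1 : t.length ≤ w.length + 1 := by
          have := ht.length_le; simpa using this
        have h2 : t.length = (w ++ [i]).length := by simp; omega
        have : t = w ++ [i] := ht.eq_of_length h2
        subst this
        exact mem_extendTree.mpr (Or.inr ⟨w, hw, hlen, i, hi, rfl⟩)

lemma treeHt_extendTree {T' : Finset (List ℕ)} (hT' : IsOTree T') (M : ℕ) :
    treeHt (extendTree T' M) = treeHt T' + 1 := by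
  apply le_antisymm
  · apply Finset.sup_le
    intro v hv
    rcases mem_extendTree.mp hv with h | ⟨w, hw, hlen, i, hi, rfl⟩
    · have := len_lt_treeHt h; omega
    · simp only [List.length_append, List.length_cons, List.length_nil]; omega
  · obtain ⟨w, hw, hlen⟩ := exists_top hT'
    have hmem : w ++ [0] ∈ extendTree T' M :=
      mem_extendTree.mpr (Or.inr ⟨w, hw, hlen, 0, Nat.zero_le _, rfl⟩)
    have := len_lt_treeHt hmem
    simp only [List.length_append, List.length_cons, List.length_nil] at this
    omega

lemma pstar_extendTree {T' : Finset (List ℕ)} (hT' : IsOTree T') (M : ℕ) :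
    pstar (extendTree T' M) = T' := by
  have hht := treeHt_extendTree hT' M
  have h1 := treeHt_pos hT'
  rw [pstar, if_neg (by omega)]
  ext v
  rw [Finset.mem_filter]
  constructor
  · rintro ⟨hv, hlt⟩
    rcases mem_extendTree.mp hv with h | ⟨w, hw, hlen, i, hi, rfl⟩
    · exact h
    · rw [hht] at hlt
      simp only [List.length_append, List.length_cons, List.length_nil] at hlt
      omega
  · intro hv
    refine ⟨mem_extendTree.mpr (Or.inl hv), ?_⟩
    have := len_lt_treeHt hv
    omega

lemma mem_le_foldr_max {b : ℕ} {l : List ℕ} (h : b ∈ l) : b ≤ l.foldr max 0 := by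
  induction l with
  | nil => simp at h
  | cons c cs ih =>
    rcases List.mem_cons.mp h with rfl | h
    · exact le_max_left _ _
    · exact le_trans (ih h) (le_max_right _ _)

lemma take_concat (p : List ℕ) (a : ℕ) :
    (p ++ [a]).take ((p ++ [a]).length - 1) = p := by
  have h : (p ++ [a]).length - 1 = p.length := by simp
  rw [h]; exact List.take_left

lemma drop_concat (p : List ℕ) (a : ℕ) :
    (p ++ [a]).drop ((p ++ [a]).length - 1) = [a] := by
  have h : (p ++ [a]).length - 1 = p.length := by simp
  rw [h]; exact List.drop_left

lemma main_ext {S T' : Finset (List ℕ)} (hS : IsOTree S) (hT' : IsOTree T')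
    (hc : treeHt T' + 1 = treeHt S) (f' : List ℕ → List ℕ)
    (hf' : IsTreeHom (pstar S) T' f') :
    ∃ f : List ℕ → List ℕ,
      IsTreeHom S (extendTree T' (S.sup fun v => v.foldr max 0)) f ∧
      ∀ v ∈ pstar S, f v = f' v := by
  classical
  obtain ⟨hht, hmem', hinj', hlex', hmeet', hlen'⟩ := hf'
  set M := S.sup fun v : List ℕ => v.foldr max 0 with hM
  have h1' := treeHt_pos hT'
  have h2 : 2 ≤ treeHt S := by omega
  have hne1 : treeHt S ≠ 1 := by omega
  have hps : pstar S = S.filter fun v => v.length + 1 < treeHt S := by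
    rw [pstar, if_neg hne1]
  have hmemps : ∀ {v : List ℕ}, v ∈ S → v.length + 1 < treeHt S → v ∈ pstar S := by
    intro v hv hlt; rw [hps, Finset.mem_filter]; exact ⟨hv, hlt⟩
  set f : List ℕ → List ℕ := fun v =>
    if v.length + 1 < treeHt S then f' v
    else f' (v.take (v.length - 1)) ++ v.drop (v.length - 1) with hf
  have hfsmall : ∀ {v : List ℕ}, v.length + 1 < treeHt S → f v = f' v := by
    intro v hv; simp only [hf]; rw [if_pos hv]
  have hftop : ∀ {p : List ℕ} {a : ℕ}, ¬ ((p ++ [a]).length + 1 < treeHt S) →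
      f (p ++ [a]) = f' p ++ [a] := by
    intro p a hcond
    simp only [hf]
    rw [if_neg hcond, take_concat, drop_concat]
  have hdecomp : ∀ {v : List ℕ}, v ∈ S → ¬ (v.length + 1 < treeHt S) →
      ∃ p a, v = p ++ [a] ∧ p ∈ pstar S ∧ p.length + 1 = treeHt T' := by
    intro v hv hcond
    have hle := len_lt_treeHt hv
    have hlenv : v.length = treeHt T' := by omega
    rcases List.eq_nil_or_concat v with h | ⟨p, a, h⟩
    · subst h; simp at hlenv; omega
    · rw [List.concat_eq_append] at h
      subst h
      have hp : p ∈ S := hS.2 _ hv p (List.prefix_append _ _)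
      have hplen : p.length + 1 = treeHt T' := by
        simp at hlenv; omega
      exact ⟨p, a, rfl, hmemps hp (by omega), hplen⟩
  have hflen : ∀ v ∈ S, (f v).length = v.length := by
    intro v hv
    by_cases hcond : v.length + 1 < treeHt S
    · rw [hfsmall hcond]; exact hlen' v (hmemps hv hcond)
    · obtain ⟨p, a, rfl, hpS, hp1⟩ := hdecomp hv hcond
      rw [hftop hcond]
      simp [hlen' p hpS]
  have hfmem : ∀ v ∈ S, f v ∈ extendTree T' M := by
    intro v hv
    by_cases hcond : v.length + 1 < treeHt S
    · rw [hfsmall hcond]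
      exact mem_extendTree.mpr (Or.inl (hmem' v (hmemps hv hcond)))
    · obtain ⟨p, a, rfl, hpS, hp1⟩ := hdecomp hv hcond
      rw [hftop hcond]
      have haM : a ≤ M := by
        have ha : a ∈ p ++ [a] := by simp
        exact le_trans (mem_le_foldr_max ha)
          (Finset.le_sup (f := fun v : List ℕ => v.foldr max 0) hv)
      exact mem_extendTree.mpr
        (Or.inr ⟨f' p, hmem' p hpS, by rw [hlen' p hpS]; exact hp1, a, haM, rfl⟩)
  have hfinj : ∀ v ∈ S, ∀ w ∈ S, f v = f w → v = w := by
    intro v hv w hw heq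
    have hlvw : v.length = w.length := by
      rw [← hflen v hv, ← hflen w hw, heq]
    by_cases hcond : v.length + 1 < treeHt S
    · have hcondw : w.length + 1 < treeHt S := by omega
      rw [hfsmall hcond, hfsmall hcondw] at heq
      exact hinj' v (hmemps hv hcond) w (hmemps hw hcondw) heq
    · have hcondw : ¬ (w.length + 1 < treeHt S) := by omega
      obtain ⟨p, a, rfl, hpS, hp1⟩ := hdecomp hv hcond
      obtain ⟨q, b, rfl, hqS, hq1⟩ := hdecomp hw hcondw
      rw [hftop hcond, hftop hcondw] at heq
      obtain ⟨h1, h3⟩ := List.append_inj' heq (by simp)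
      have hpq : p = q := hinj' p hpS q hqS h1
      subst hpq
      simp only [List.cons.injEq, and_true] at h3
      rw [h3]
  have hflex : ∀ v ∈ S, ∀ w ∈ S, lexLE v w → lexLE (f v) (f w) := by
    intro v hv w hw hvw
    rcases hvw with rfl | hL
    · exact Or.inl rfl
    · by_cases hcv : v.length + 1 < treeHt S <;> by_cases hcw : w.length + 1 < treeHt S
      · rw [hfsmall hcv, hfsmall hcw]
        exact hlex' v (hmemps hv hcv) w (hmemps hw hcw) (Or.inr hL)
      · obtain ⟨q, b, rfl, hqS, hq1⟩ := hdecomp hw hcw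
        rw [hfsmall hcv, hftop hcw]
        have hlen_le : v.length ≤ q.length := by omega
        rcases lex_of_lex_append_le hL hlen_le with rfl | hL'
        · exact Or.inr (lex_append_self _ _)
        · rcases hlex' v (hmemps hv hcv) q hqS (Or.inr hL') with he | hLL
          · rw [he]; exact Or.inr (lex_append_self _ _)
          · exact Or.inr (lex_append_right hLL [b])
      · obtain ⟨p, a, rfl, hpS, hp1⟩ := hdecomp hv hcv
        rw [hftop hcv, hfsmall hcw]
        have hlen_le : w.length ≤ p.length := by omega
        have hL' : List.Lex (· < ·) p w := lex_append_left_of_ge hL hlen_le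
        have hpw : p ≠ w := by rintro rfl; exact lex_irrefl _ hL'
        rcases hlex' p hpS w (hmemps hw hcw) (Or.inr hL') with he | hLL
        · exact absurd (hinj' p hpS w (hmemps hw hcw) he) hpw
        · refine Or.inr (lex_append_of_ge hLL ?_ a)
          rw [hlen' w (hmemps hw hcw), hlen' p hpS]; exact hlen_le
      · obtain ⟨p, a, rfl, hpS, hp1⟩ := hdecomp hv hcv
        obtain ⟨q, b, rfl, hqS, hq1⟩ := hdecomp hw hcw
        rw [hftop hcv, hftop hcw]
        by_cases hpq : p = q
        · subst hpq
          have hab : a < b := lt_of_lex_append_same hL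
          exact Or.inr (lex_append_same_of_lt _ hab)
        · have hL' : List.Lex (· < ·) p q := lex_of_lex_append hL (by omega) hpq
          rcases hlex' p hpS q hqS (Or.inr hL') with he | hLL
          · exact absurd (hinj' p hpS q hqS he) hpq
          · refine Or.inr (lex_append_of_lex hLL ?_ a b)
            rw [hlen' p hpS, hlen' q hqS]; omega
  have hlcp_small : ∀ {x : List ℕ} (y : List ℕ), x.length + 1 < treeHt S →
      (lcp x y).length + 1 < treeHt S := by
    intro x y hx
    have := (lcp_prefix_left x y).length_le
    omega
  have hfmeet : ∀ v ∈ S, ∀ w ∈ S, f (lcp v w) = lcp (f v) (f w) := by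
    intro v hv w hw
    by_cases hcv : v.length + 1 < treeHt S <;> by_cases hcw : w.length + 1 < treeHt S
    · rw [hfsmall hcv, hfsmall hcw, hfsmall (hlcp_small w hcv)]
      exact hmeet' v (hmemps hv hcv) w (hmemps hw hcw)
    · obtain ⟨q, b, rfl, hqS, hq1⟩ := hdecomp hw hcw
      have hvq : v.length ≤ q.length := by omega
      have hvq' : (f' v).length ≤ (f' q).length := by
        rw [hlen' v (hmemps hv hcv), hlen' q hqS]; exact hvq
      rw [lcp_append_right hvq b, hfsmall (hlcp_small q hcv), hfsmall hcv, hftop hcw,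
        lcp_append_right hvq' b, hmeet' v (hmemps hv hcv) q hqS]
    · obtain ⟨p, a, rfl, hpS, hp1⟩ := hdecomp hv hcv
      have hwp : w.length ≤ p.length := by omega
      have hp_small : p.length + 1 < treeHt S := by omega
      have hwp' : (f' w).length ≤ (f' p).length := by
        rw [hlen' w (hmemps hw hcw), hlen' p hpS]; exact hwp
      rw [lcp_comm (p ++ [a]) w, lcp_append_right hwp a, lcp_comm w p,
        hfsmall (hlcp_small w hp_small), hftop hcv, hfsmall hcw,
        lcp_comm (f' p ++ [a]) (f' w), lcp_append_right hwp' a,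
        lcp_comm (f' w) (f' p), hmeet' p hpS w (hmemps hw hcw)]
    · obtain ⟨p, a, rfl, hpS, hp1⟩ := hdecomp hv hcv
      obtain ⟨q, b, rfl, hqS, hq1⟩ := hdecomp hw hcw
      by_cases hpq : p = q
      · subst hpq
        by_cases hab : a = b
        · subst hab
          rw [lcp_self, hftop hcv, lcp_self]
        · have hp_small : p.length + 1 < treeHt S := by omega
          rw [lcp_append_same p hab, hftop hcv, hftop hcw,
            lcp_append_same (f' p) hab, hfsmall hp_small]
      · have hplen : p.length = q.length := by omega
        have hfne : f' p ≠ f' q := fun h => hpq (hinj' p hpS q hqS h)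
        have hflen2 : (f' p).length = (f' q).length := by
          rw [hlen' p hpS, hlen' q hqS]; exact hplen
        have hsm : (lcp p q).length + 1 < treeHt S := by
          have := (lcp_prefix_left p q).length_le; omega
        rw [lcp_append_ne hplen hpq a b, hftop hcv, hftop hcw,
          lcp_append_ne hflen2 hfne a b, hfsmall hsm, hmeet' p hpS q hqS]
  refine ⟨f, ⟨?_, hfmem, hfinj, hflex, hfmeet, hflen⟩, ?_⟩
  · rw [treeHt_extendTree hT' M]; omega
  · intro v hvps
    rw [hps, Finset.mem_filter] at hvps
    exact hfsmall hvps.2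

theorem pstar_frank (S T' : Finset (List ℕ)) (hS : IsOTree S) (hT' : IsOTree T') :
    ∃ T : Finset (List ℕ), IsOTree T ∧ pstar T = T' ∧
      ∀ f' : List ℕ → List ℕ, IsTreeHom (pstar S) T' f' →
        ∃ f : List ℕ → List ℕ, IsTreeHom S T f ∧ ∀ v ∈ pstar S, f v = f' v := by
  by_cases hc : treeHt T' + 1 = treeHt S
  · refine ⟨extendTree T' (S.sup fun v => v.foldr max 0),
      isOTree_extendTree hT' _, pstar_extendTree hT' _, ?_⟩
    intro f' hf'
    exact main_ext hS hT' hc f' hf'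
  · by_cases h11 : treeHt S = 1 ∧ treeHt T' = 1
    · refine ⟨T', hT', by rw [pstar, if_pos h11.2], ?_⟩
      intro f' hf'
      refine ⟨f', ?_, fun v _ => rfl⟩
      rwa [pstar, if_pos h11.1] at hf'
    · refine ⟨extendTree T' 0, isOTree_extendTree hT' 0, pstar_extendTree hT' 0, ?_⟩
      intro f' hf'
      exfalso
      have h1 := hf'.1
      have hS1 := treeHt_pos hS
      have hT1 := treeHt_pos hT'
      by_cases h2 : 2 ≤ treeHt S
      · rw [treeHt_pstar hS h2] at h1
        omega
      · have hS1' : treeHt S = 1 := by omega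
        rw [pstar, if_pos hS1'] at h1
        exact h11 ⟨hS1', by omega⟩
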